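/- For every x > 0 one has 0 < ( x − 2 + e^{−x} ( x + 2 ) ) / x < 1. -/

import Mathlib

open Real

lemma ugkp_num_pos (x : ℝ) (hx : 0 < x) :
    0 < x - 2 + Real.exp (-x) * (x + 2) := by
  set f : ℝ → ℝ := fun y => y - 2 + Real.exp (-y) * (y + 2) with hf
  have hderiv : ∀ y : ℝ, HasDerivAt f (1 - Real.exp (-y) * (y + 1)) y := by
    intro y
    have h1 : HasDerivAt (fun z : ℝ => Real.exp (-z)) (-Real.exp (-y)) y := by
      simpa using (hasDerivAt_neg y).exp
    have h2 : HasDerivAt (fun z : ℝ => Real.exp (-z) * (z + 2))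
        (-Real.exp (-y) * (y + 2) + Real.exp (-y) * 1) y :=
      h1.mul ((hasDerivAt_id y).add_const 2)
    have h3 : HasDerivAt f (1 + (-Real.exp (-y) * (y + 2) + Real.exp (-y) * 1)) y :=
      ((hasDerivAt_id' y).sub_const 2).add h2
    convert h3 using 1
    ring
  have hmono : StrictMonoOn f (Set.Ici (0:ℝ)) := by
    apply strictMonoOn_of_deriv_pos (convex_Ici 0)
    · exact fun y _ => (hderiv y).differentiableAt.continuousAt.continuousWithinAt
    · intro y hy
      rw [interior_Ici] at hy
      rw [(hderiv y).deriv]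
      have h := Real.add_one_lt_exp (ne_of_gt hy)
      have he : Real.exp (-y) * Real.exp y = 1 := by
        rw [← Real.exp_add]; simp
      nlinarith [Real.exp_pos (-y), Real.exp_pos y]
  have h0 : f 0 = 0 := by simp [hf]
  have := hmono (Set.self_mem_Ici) (Set.mem_Ici.mpr hx.le) hx
  rw [h0] at this
  exact this

theorem ugkp_flux_limiter_bounds (x : ℝ) (hx : 0 < x) :
    0 < (x - 2 + Real.exp (-x) * (x + 2)) / x ∧
    (x - 2 + Real.exp (-x) * (x + 2)) / x < 1 := by
  have hnum := ugkp_num_pos x hx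
  constructor
  · positivity
  · rw [div_lt_one hx]
    have h := Real.add_one_lt_exp (ne_of_gt hx)
    have he : Real.exp (-x) * Real.exp x = 1 := by
      rw [← Real.exp_add]; simp
    nlinarith [Real.exp_pos (-x), Real.exp_pos x]
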